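/- Let K_n^+ be the first sample size at which all n fragments of a random Dirichlet D_n(θ) partition have been visited (coupon collector time). Then for k ≥ n, P(K_n^+ ≤ k) = n! B_{k,n}(θ)/(nθ)_k; in particular, for θ=1 this equals C(k-1,n-1)/C(n+k-1,k), and in the limit θ→∞ it equals n! S(k,n)/n^k. -/

import Mathlib

open Finset Classical Filter

/-- Rising factorial `(x)_k = x(x+1)⋯(x+k-1)`. -/
noncomputable def rf (x : ℝ) (k : ℕ) : ℝ := ∏ i ∈ Finset.range k, (x + i)

/-- The Bell polynomial `B_{k,p}(θ)` in the variables `x_i = (θ)_i`. -/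
noncomputable def BellP (θ : ℝ) (k p : ℕ) : ℝ :=
  ((k.factorial : ℝ) / (p.factorial : ℝ)) *
    ∑ b ∈ Finset.Nat.antidiagonalTuple p k,
      if ∀ q, 1 ≤ b q then ∏ q, rf θ (b q) / ((b q).factorial : ℝ) else 0

/-- Unconditional probability of a sample sequence of conditionally i.i.d.
draws from `Sₙ ~ D_n(θ)` (equivalently, the Pólya urn law). -/
noncomputable def sampleProb (θ : ℝ) {n k : ℕ} (m : Fin k → Fin n) : ℝ :=
  (∏ c : Fin n, rf θ ((Finset.univ.filter fun l => m l = c).card)) /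
    rf ((n : ℝ) * θ) k

/-- Stirling numbers of the second kind. -/
def stirling2 : ℕ → ℕ → ℕ
  | 0, 0 => 1
  | 0, _ + 1 => 0
  | _ + 1, 0 => 0
  | k + 1, p + 1 => (p + 1) * stirling2 k (p + 1) + stirling2 k p


lemma rf_one (j : ℕ) : rf 1 j = (j.factorial : ℝ) := by
  unfold rf
  rw [← Finset.prod_range_add_one_eq_factorial j]
  push_cast
  apply Finset.prod_congr rfl
  intro i _
  ring

lemma rf_nat (n k : ℕ) : rf (n : ℝ) k = (n.ascFactorial k : ℝ) := by
  induction k with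
  | zero => simp [rf]
  | succ k ih =>
    rw [rf, Finset.prod_range_succ, ← rf, ih, Nat.ascFactorial_succ]
    push_cast
    ring

lemma rf_pos {x : ℝ} (hx : 0 < x) (k : ℕ) : 0 < rf x k := by
  apply Finset.prod_pos
  intro i _
  positivity

lemma prod_ite_zero' {n : ℕ} (p : Fin n → Prop) [DecidablePred p] (f : Fin n → ℝ) :
    (∏ c, if p c then f c else 0) = if ∀ c, p c then ∏ c, f c else 0 := by
  by_cases h : ∀ c, p c
  · rw [if_pos h]
    exact Finset.prod_congr rfl fun c _ => if_pos (h c)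
  · rw [if_neg h]
    push_neg at h
    obtain ⟨c, hc⟩ := h
    exact Finset.prod_eq_zero (Finset.mem_univ c) (if_neg hc)

lemma tendsto_rf_div (a : ℝ) (j : ℕ) :
    Tendsto (fun θ : ℝ => rf (a * θ) j / θ ^ j) atTop (nhds (a ^ j)) := by
  have h2 : Tendsto (fun θ : ℝ => ∏ i ∈ Finset.range j, (a + i / θ)) atTop
      (nhds (∏ i ∈ Finset.range j, a)) := by
    apply tendsto_finset_prod
    intro i _
    have : Tendsto (fun θ : ℝ => (i : ℝ) / θ) atTop (nhds 0) := by
      simpa [div_eq_mul_inv] using tendsto_inv_atTop_zero.const_mul (i : ℝ)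
    simpa using tendsto_const_nhds.add this
  rw [Finset.prod_const, Finset.card_range] at h2
  apply h2.congr'
  filter_upwards [eventually_gt_atTop 0] with θ hθ
  have hp : θ ^ j = ∏ _i ∈ Finset.range j, θ := by
    rw [Finset.prod_const, Finset.card_range]
  rw [rf, hp, ← Finset.prod_div_distrib]
  apply Finset.prod_congr rfl
  intro i _
  field_simp

noncomputable def cnt {n k : ℕ} (m : Fin k → Fin n) (c : Fin n) : ℕ :=
  (Finset.univ.filter fun l => m l = c).card

lemma cnt_cons {n k : ℕ} (c : Fin n) (m : Fin k → Fin n) (c' : Fin n) :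
    cnt (Fin.cons c m) c' = (if c = c' then 1 else 0) + cnt m c' := by
  simp only [cnt, Finset.card_filter]
  rw [Fin.sum_univ_succ]
  simp [Fin.cons_zero, Fin.cons_succ]

noncomputable def Mr {n : ℕ} (k : ℕ) (b : Fin n → ℕ) : ℝ :=
  (k.factorial : ℝ) / ∏ c, ((b c).factorial : ℝ)

lemma prod_fact_ne_zero {n : ℕ} (b : Fin n → ℕ) : (∏ c, ((b c).factorial : ℝ)) ≠ 0 :=
  Finset.prod_ne_zero_iff.mpr fun c _ => Nat.cast_ne_zero.mpr (Nat.factorial_ne_zero _)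

/-- key recurrence -/
lemma Mr_rec {n k : ℕ} (b : Fin n → ℕ) (hb : ∑ c, b c = k + 1) :
    ∑ c, (if 1 ≤ b c then Mr k (fun c' => b c' - if c = c' then 1 else 0) else 0)
      = Mr (k+1) b := by
  have key : ∀ c : Fin n, (if 1 ≤ b c then Mr k (fun c' => b c' - if c = c' then 1 else 0) else 0)
      = (k.factorial : ℝ) * (b c) / ∏ c', ((b c').factorial : ℝ) := by
    intro c
    rcases Nat.eq_zero_or_pos (b c) with h0 | h1
    · simp [h0]
    · rw [if_pos (show 1 ≤ b c from h1)]
      obtain ⟨j, hj⟩ := Nat.exists_eq_add_of_le h1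
      unfold Mr
      have hsplit : ∀ g : Fin n → ℝ, ∏ c', g c' = g c * ∏ c' ∈ Finset.univ.erase c, g c' :=
        fun g => (Finset.mul_prod_erase Finset.univ g (Finset.mem_univ c)).symm
      rw [hsplit fun c' => (((b c' - if c = c' then 1 else 0)).factorial : ℝ),
          hsplit fun c' => (((b c')).factorial : ℝ)]
      have he : ∏ c' ∈ Finset.univ.erase c, (((b c' - if c = c' then 1 else 0)).factorial : ℝ)
          = ∏ c' ∈ Finset.univ.erase c, (((b c')).factorial : ℝ) := by
        apply Finset.prod_congr rfl
        intro c' hc'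
        rw [if_neg (Finset.ne_of_mem_erase hc').symm]
        simp
      rw [he]
      have hPne : (∏ c' ∈ Finset.univ.erase c, (((b c')).factorial : ℝ)) ≠ 0 :=
        Finset.prod_ne_zero_iff.mpr fun c' _ => Nat.cast_ne_zero.mpr (Nat.factorial_ne_zero _)
      have hbc : b c = j + 1 := by omega
      rw [if_pos rfl, hbc]
      have : j + 1 - 1 = j := rfl
      rw [this]
      have hfact : ((j+1).factorial : ℝ) = (j+1) * (j.factorial : ℝ) := by
        rw [Nat.factorial_succ]; push_cast; ring
      rw [hfact]
      have hjne : (j.factorial : ℝ) ≠ 0 := Nat.cast_ne_zero.mpr (Nat.factorial_ne_zero _)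
      field_simp
      push_cast; ring
  rw [Finset.sum_congr rfl fun c _ => key c]
  rw [← Finset.sum_div, ← Finset.mul_sum]
  unfold Mr
  rw [← Nat.cast_sum, hb]
  rw [Nat.factorial_succ]
  push_cast
  ring_nf

lemma master {n : ℕ} : ∀ (k : ℕ) (F : Fin n → ℕ → ℝ),
    ∑ m : Fin k → Fin n, ∏ c, F c (cnt m c)
      = ∑ b ∈ Finset.Nat.antidiagonalTuple n k, Mr k b * ∏ c, F c (b c)
  | 0, F => by
    rw [Finset.Nat.antidiagonalTuple_zero_right, Finset.sum_singleton]
    have h1 : ∀ m : Fin 0 → Fin n, ∏ c, F c (cnt m c) = ∏ c, F c 0 := by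
      intro m
      apply Finset.prod_congr rfl
      intro c _
      have hc : cnt m c = 0 := by simp [cnt]
      rw [hc]
    rw [Finset.sum_congr rfl fun m _ => h1 m]
    rw [Finset.sum_const]
    have : (Finset.univ : Finset (Fin 0 → Fin n)).card = 1 := by
      simp [Finset.card_univ]
    rw [this, one_smul]
    simp [Mr]
  | k + 1, F => by
    rw [← Fintype.sum_equiv (Fin.consEquiv fun _ => Fin n)
        (fun p => ∏ c, F c (cnt (Fin.cons p.1 p.2) c))
        (fun m => ∏ c, F c (cnt m c)) (fun p => rfl)]
    rw [Fintype.sum_prod_type]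
    have step1 : ∀ c : Fin n,
        ∑ m : Fin k → Fin n, ∏ c', F c' (cnt (Fin.cons c m) c')
          = ∑ b ∈ Finset.Nat.antidiagonalTuple n k,
              Mr k b * ∏ c', F c' ((if c = c' then 1 else 0) + b c') := by
      intro c
      have := master k (fun c' j => F c' ((if c = c' then 1 else 0) + j))
      rw [← this]
      apply Finset.sum_congr rfl
      intro m _
      apply Finset.prod_congr rfl
      intro c' _
      rw [cnt_cons]
    have step2 : ∀ c : Fin n,
        ∑ b ∈ Finset.Nat.antidiagonalTuple n k,
            Mr k b * ∏ c', F c' ((if c = c' then 1 else 0) + b c')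
          = ∑ b' ∈ (Finset.Nat.antidiagonalTuple n (k+1)).filter (fun b' => 1 ≤ b' c),
              Mr k (fun c' => b' c' - if c = c' then 1 else 0) * ∏ c', F c' (b' c') := by
      intro c
      refine Finset.sum_nbij' (i := fun b => fun c' => (if c = c' then 1 else 0) + b c')
        (j := fun b' => fun c' => b' c' - if c = c' then 1 else 0) ?_ ?_ ?_ ?_ ?_
      · intro b hb
        rw [Finset.Nat.mem_antidiagonalTuple] at hb
        rw [Finset.mem_filter, Finset.Nat.mem_antidiagonalTuple]
        constructor
        · rw [Finset.sum_add_distrib, hb, Finset.sum_ite_eq]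
          simp
          omega
        · simp
      · intro b' hb'
        rw [Finset.mem_filter, Finset.Nat.mem_antidiagonalTuple] at hb'
        rw [Finset.Nat.mem_antidiagonalTuple]
        obtain ⟨hs, hc⟩ := hb'
        have h1 : ∑ c', b' c' = b' c + ∑ c' ∈ Finset.univ.erase c, b' c' :=
          (Finset.add_sum_erase Finset.univ b' (Finset.mem_univ c)).symm
        have h2 : ∑ c', (b' c' - if c = c' then 1 else 0)
            = (b' c - 1) + ∑ c' ∈ Finset.univ.erase c, b' c' := by
          rw [← Finset.add_sum_erase Finset.univ _ (Finset.mem_univ c), if_pos rfl]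
          congr 1
          apply Finset.sum_congr rfl
          intro c' hc'
          rw [if_neg (Finset.ne_of_mem_erase hc').symm]
          omega
        show ∑ c' : Fin n, (b' c' - if c = c' then 1 else 0) = k
        omega
      · intro b _
        funext c'
        simp only [Nat.add_sub_cancel_left]
      · intro b' hb'
        rw [Finset.mem_filter] at hb'
        have h2 := hb'.2
        funext c'
        by_cases h : c = c'
        · subst h
          simp
          omega
        · simp [h]
      · intro b hb
        simp only [Nat.add_sub_cancel_left]
    rw [Finset.sum_congr rfl fun c _ => (step1 c).trans (step2 c)]
    have step3 : ∀ c : Fin n,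
        ∑ b' ∈ (Finset.Nat.antidiagonalTuple n (k+1)).filter (fun b' => 1 ≤ b' c),
            Mr k (fun c' => b' c' - if c = c' then 1 else 0) * ∏ c', F c' (b' c')
          = ∑ b' ∈ Finset.Nat.antidiagonalTuple n (k+1),
              (if 1 ≤ b' c then Mr k (fun c' => b' c' - if c = c' then 1 else 0) else 0)
                * ∏ c', F c' (b' c') := by
      intro c
      rw [Finset.sum_filter]
      apply Finset.sum_congr rfl
      intro b' _
      by_cases h : 1 ≤ b' c <;> simp [h]
    rw [Finset.sum_congr rfl fun c _ => step3 c]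
    rw [Finset.sum_comm]
    apply Finset.sum_congr rfl
    intro b' hb'
    rw [Finset.Nat.mem_antidiagonalTuple] at hb'
    rw [← Finset.sum_mul, Mr_rec b' hb']

lemma sum_adT_succ {M : Type*} [AddCommMonoid M] (n k : ℕ) (g : (Fin (n+1) → ℕ) → M) :
    ∑ b ∈ Finset.Nat.antidiagonalTuple (n+1) k, g b
      = ∑ p ∈ Finset.HasAntidiagonal.antidiagonal k, ∑ b ∈ Finset.Nat.antidiagonalTuple n p.2,
          g (Fin.cons p.1 b) := by
  rw [Finset.sum_sigma']
  refine (Finset.sum_nbij'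
    (i := fun (x : Σ _p : ℕ × ℕ, (Fin n → ℕ)) => Fin.cons x.1.1 x.2)
    (j := fun (b : Fin (n+1) → ℕ) => (⟨(b 0, ∑ c : Fin n, b c.succ), Fin.tail b⟩ : Σ _p : ℕ × ℕ, (Fin n → ℕ))) ?_ ?_ ?_ ?_ ?_).symm
  · rintro ⟨⟨i1, i2⟩, b⟩ hx
    rw [Finset.mem_sigma, Finset.HasAntidiagonal.mem_antidiagonal] at hx
    rw [Finset.Nat.mem_antidiagonalTuple]
    obtain ⟨h1, h2⟩ := hx
    rw [Finset.Nat.mem_antidiagonalTuple] at h2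
    rw [Fin.sum_univ_succ]
    simp only [Fin.cons_zero, Fin.cons_succ]
    rw [h2]
    exact h1
  · intro b hb
    rw [Finset.Nat.mem_antidiagonalTuple] at hb
    rw [Finset.mem_sigma, Finset.HasAntidiagonal.mem_antidiagonal]
    constructor
    · rw [← hb, Fin.sum_univ_succ]
    · rw [Finset.Nat.mem_antidiagonalTuple]
      rfl
  · rintro ⟨⟨i1, i2⟩, b⟩ hx
    rw [Finset.mem_sigma, Finset.HasAntidiagonal.mem_antidiagonal] at hx
    obtain ⟨h1, h2⟩ := hx
    rw [Finset.Nat.mem_antidiagonalTuple] at h2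
    simp only [Fin.cons_zero, Fin.cons_succ, Fin.tail_cons]
    rw [h2]
  · intro b hb
    exact Fin.cons_self_tail b
  · intro x hx
    rfl

lemma filter_pos_empty {n k : ℕ} (h : k < n) :
    (Finset.Nat.antidiagonalTuple n k).filter (fun b => ∀ q, 1 ≤ b q) = ∅ := by
  rw [Finset.filter_eq_empty_iff]
  intro b hb hpos
  rw [Finset.Nat.mem_antidiagonalTuple] at hb
  have : (n : ℕ) ≤ ∑ q, b q := by
    calc (n : ℕ) = ∑ _q : Fin n, 1 := by simp
    _ ≤ ∑ q, b q := Finset.sum_le_sum fun q _ => hpos q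
  omega

lemma comp_card : ∀ n k : ℕ, 1 ≤ n → n ≤ k →
    ((Finset.Nat.antidiagonalTuple n k).filter (fun b => ∀ q, 1 ≤ b q)).card
      = (k-1).choose (n-1)
  | 0, k, hn, _ => by omega
  | 1, k, _, hk => by
    rw [Finset.Nat.antidiagonalTuple_one, Finset.filter_singleton, if_pos]
    · simp
    · intro q
      have : q = 0 := Subsingleton.elim q 0
      subst this
      simpa using hk
  | (n+2), k, _, hk => by
    have hn1 : (1:ℕ) ≤ n + 1 := by omega
    rw [Finset.card_filter]
    rw [sum_adT_succ (n+1) k (fun b => if ∀ q, 1 ≤ b q then 1 else 0)]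
    have hterm : ∀ p ∈ Finset.HasAntidiagonal.antidiagonal k,
        (∑ b ∈ Finset.Nat.antidiagonalTuple (n+1) p.2,
          if ∀ q, 1 ≤ (Fin.cons p.1 b : Fin (n+2) → ℕ) q then 1 else 0)
        = if 1 ≤ p.1 ∧ n + 1 ≤ p.2 then (p.2 - 1).choose n else 0 := by
      intro p hp
      have hsplit : ∀ b : Fin (n+1) → ℕ,
          (∀ q, 1 ≤ (Fin.cons p.1 b : Fin (n+2) → ℕ) q) ↔ (1 ≤ p.1 ∧ ∀ q, 1 ≤ b q) := by
        intro b
        rw [Fin.forall_fin_succ]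
        simp [Fin.cons_zero, Fin.cons_succ]
      by_cases h1 : 1 ≤ p.1
      · by_cases h2 : n + 1 ≤ p.2
        · rw [if_pos ⟨h1, h2⟩]
          have := comp_card (n+1) p.2 hn1 h2
          simp only [Nat.add_sub_cancel] at this
          rw [← this, Finset.card_filter]
          simp only [hsplit, h1, true_and]
        · rw [if_neg (by tauto)]
          apply Finset.sum_eq_zero
          intro b hb
          rw [if_neg]
          rw [hsplit b]
          rintro ⟨-, hpos⟩
          have := filter_pos_empty (show p.2 < n + 1 by omega) (n := n+1)
          have hmem : b ∈ (Finset.Nat.antidiagonalTuple (n+1) p.2).filter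
              (fun b => ∀ q, 1 ≤ b q) := Finset.mem_filter.mpr ⟨hb, hpos⟩
          rw [this] at hmem
          exact absurd hmem (Finset.notMem_empty b)
      · rw [if_neg (by tauto)]
        apply Finset.sum_eq_zero
        intro b _
        rw [if_neg]
        rw [hsplit b]
        tauto
    rw [Finset.sum_congr rfl hterm]
    rw [Finset.Nat.sum_antidiagonal_eq_sum_range_succ_mk]
    rw [← Finset.sum_filter]
    have hfe : (Finset.range (k+1)).filter (fun i => 1 ≤ i ∧ n + 1 ≤ k - i)
        = Finset.Icc 1 (k - (n+1)) := by
      ext i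
      simp only [Finset.mem_filter, Finset.mem_range, Finset.mem_Icc]
      omega
    rw [hfe]
    have hre : ∑ i ∈ Finset.Icc 1 (k - (n+1)), (k - i - 1).choose n
        = ∑ j ∈ Finset.Icc n (k - 2), j.choose n := by
      refine Finset.sum_nbij' (i := fun i => k - i - 1) (j := fun j => k - j - 1) ?_ ?_ ?_ ?_ ?_
      all_goals intro a ha
      · simp only [Finset.mem_Icc] at *; omega
      · simp only [Finset.mem_Icc] at *; omega
      · simp only [Finset.mem_Icc] at ha; beta_reduce; omega
      · simp only [Finset.mem_Icc] at ha; beta_reduce; omega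
      · rfl
    rw [hre, Nat.sum_Icc_choose]
    congr 1
    omega

noncomputable def Sbar (k n : ℕ) : ℝ :=
  ∑ b ∈ Finset.Nat.antidiagonalTuple n k, if ∀ q, 1 ≤ b q then Mr k b else 0

lemma Sbar_eq : ∀ (k n : ℕ), Sbar k n = (n.factorial : ℝ) * (stirling2 k n : ℝ)
  | 0, 0 => by
    rw [Sbar, Finset.Nat.antidiagonalTuple_zero_zero, Finset.sum_singleton, if_pos (by intro q; exact q.elim0)]
    simp [Mr, stirling2]
  | 0, (m+1) => by
    rw [Sbar, Finset.Nat.antidiagonalTuple_zero_right, Finset.sum_singleton, if_neg (by intro h; simpa using h 0)]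
    simp [stirling2]
  | (k+1), 0 => by
    rw [Sbar, Finset.Nat.antidiagonalTuple_zero_succ]
    simp [stirling2]
  | (k+1), (p+1) => by
    have stepA : ∀ b' ∈ Finset.Nat.antidiagonalTuple (p+1) (k+1),
        (if ∀ q, 1 ≤ b' q then Mr (k+1) b' else 0)
          = ∑ c, if ∀ q, 1 ≤ b' q then Mr k (fun c' => b' c' - if c = c' then 1 else 0) else 0 := by
      intro b' hb'
      rw [Finset.Nat.mem_antidiagonalTuple] at hb'
      by_cases hpos : ∀ q, 1 ≤ b' q
      · rw [if_pos hpos, ← Mr_rec b' hb']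
        apply Finset.sum_congr rfl
        intro c _
        rw [if_pos (hpos c), if_pos hpos]
      · simp [hpos]
    rw [Sbar, Finset.sum_congr rfl stepA, Finset.sum_comm]
    have stepB : ∀ c : Fin (p+1),
        (∑ b' ∈ Finset.Nat.antidiagonalTuple (p+1) (k+1),
          if ∀ q, 1 ≤ b' q then Mr k (fun c' => b' c' - if c = c' then 1 else 0) else 0)
        = ∑ b ∈ Finset.Nat.antidiagonalTuple (p+1) k,
            if ∀ q, 1 ≤ (if c = q then 1 else 0) + b q then Mr k b else 0 := by
      intro c
      rw [← Finset.sum_filter_of_ne (p := fun b' => 1 ≤ b' c)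
        (fun b' _ hne => by
          by_contra hc
          apply hne
          rw [if_neg]
          intro hall
          exact hc (hall c))]
      refine (Finset.sum_nbij' (i := fun b => fun c' => (if c = c' then 1 else 0) + b c')
        (j := fun b' => fun c' => b' c' - if c = c' then 1 else 0) ?_ ?_ ?_ ?_ ?_).symm
      · intro b hb
        rw [Finset.Nat.mem_antidiagonalTuple] at hb
        rw [Finset.mem_filter, Finset.Nat.mem_antidiagonalTuple]
        constructor
        · rw [Finset.sum_add_distrib, hb, Finset.sum_ite_eq]
          simp
          omega
        · simp
      · intro b' hb'
        rw [Finset.mem_filter, Finset.Nat.mem_antidiagonalTuple] at hb'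
        rw [Finset.Nat.mem_antidiagonalTuple]
        obtain ⟨hs, hc⟩ := hb'
        have h1 : ∑ c', b' c' = b' c + ∑ c' ∈ Finset.univ.erase c, b' c' :=
          (Finset.add_sum_erase Finset.univ b' (Finset.mem_univ c)).symm
        have h2 : ∑ c', (b' c' - if c = c' then 1 else 0)
            = (b' c - 1) + ∑ c' ∈ Finset.univ.erase c, b' c' := by
          rw [← Finset.add_sum_erase Finset.univ _ (Finset.mem_univ c), if_pos rfl]
          congr 1
          apply Finset.sum_congr rfl
          intro c' hc'
          rw [if_neg (Finset.ne_of_mem_erase hc').symm]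
          omega
        show ∑ c' : Fin (p+1), (b' c' - if c = c' then 1 else 0) = k
        omega
      · intro b _
        funext c'
        simp only [Nat.add_sub_cancel_left]
      · intro b' hb'
        rw [Finset.mem_filter] at hb'
        have h2 := hb'.2
        funext c'
        by_cases h : c = c'
        · subst h
          simp
          omega
        · simp [h]
      · intro b hb
        have harg : (fun c' => ((if c = c' then 1 else 0) + b c') - if c = c' then 1 else 0) = b := by
          funext c'
          simp only [Nat.add_sub_cancel_left]
        rw [harg]
    rw [Finset.sum_congr rfl (fun c _ => stepB c)]
    have stepC : ∀ c : Fin (p+1), ∀ b ∈ Finset.Nat.antidiagonalTuple (p+1) k,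
        (if ∀ q, 1 ≤ (if c = q then 1 else 0) + b q then Mr k b else 0)
          = (if ∀ q, 1 ≤ b q then Mr k b else 0)
            + (if b c = 0 ∧ ∀ q, q ≠ c → 1 ≤ b q then Mr k b else 0) := by
      intro c b _
      by_cases h1 : ∀ q, 1 ≤ (if c = q then 1 else 0) + b q
      · rw [if_pos h1]
        by_cases h2 : 1 ≤ b c
        · have hpos : ∀ q, 1 ≤ b q := by
            intro q
            by_cases h : c = q
            · subst h; exact h2
            · have := h1 q
              rw [if_neg h] at this
              simpa using this
          rw [if_pos hpos, if_neg (by rintro ⟨h0, -⟩; omega)]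
          ring
        · have hbc : b c = 0 := by omega
          rw [if_neg (fun hall => h2 (hall c)), if_pos ⟨hbc, fun q hq => by
            have := h1 q
            rw [if_neg (fun hcq => hq hcq.symm)] at this
            simpa using this⟩]
          ring
      · rw [if_neg h1, if_neg, if_neg]
        · ring
        · rintro ⟨h0, hrest⟩
          apply h1
          intro q
          by_cases h : c = q
          · subst h; simp
          · rw [if_neg h]
            have := hrest q (fun hqc => h hqc.symm)
            omega
        · intro hall
          apply h1
          intro q
          have := hall q
          omega
    have stepD : ∀ c : Fin (p+1),
        (∑ b ∈ Finset.Nat.antidiagonalTuple (p+1) k,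
          if b c = 0 ∧ ∀ q, q ≠ c → 1 ≤ b q then Mr k b else 0) = Sbar k p := by
      intro c
      rw [← Finset.sum_filter_of_ne (p := fun b => b c = 0)
        (fun b _ hne => by
          by_contra hc
          apply hne
          rw [if_neg]
          rintro ⟨h0, -⟩
          exact hc h0)]
      rw [Sbar]
      refine Finset.sum_nbij' (i := fun b => fun q => b (c.succAbove q))
        (j := fun bt => c.insertNth 0 bt) ?_ ?_ ?_ ?_ ?_
      · intro b hb
        rw [Finset.mem_filter, Finset.Nat.mem_antidiagonalTuple] at hb
        rw [Finset.Nat.mem_antidiagonalTuple]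
        obtain ⟨hs, h0⟩ := hb
        rw [Fin.sum_univ_succAbove b c, h0, zero_add] at hs
        exact hs
      · intro bt hbt
        rw [Finset.Nat.mem_antidiagonalTuple] at hbt
        rw [Finset.mem_filter, Finset.Nat.mem_antidiagonalTuple]
        beta_reduce
        refine ⟨?_, ?_⟩
        · rw [Fin.sum_univ_succAbove _ c, Fin.insertNth_apply_same]
          rw [zero_add]
          rw [← hbt]
          apply Finset.sum_congr rfl
          intro q _
          rw [Fin.insertNth_apply_succAbove]
        · rw [Fin.insertNth_apply_same]
      · intro b hb
        rw [Finset.mem_filter] at hb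
        beta_reduce
        rw [Fin.insertNth_eq_iff]
        exact ⟨hb.2.symm, rfl⟩
      · intro bt _
        beta_reduce
        funext q
        exact Fin.insertNth_apply_succAbove (α := fun _ => ℕ) c 0 bt q
      · intro b hb
        rw [Finset.mem_filter] at hb
        obtain ⟨-, h0⟩ := hb
        have hcond : (b c = 0 ∧ ∀ q, q ≠ c → 1 ≤ b q) ↔ (∀ q, 1 ≤ b (c.succAbove q)) := by
          constructor
          · rintro ⟨-, hr⟩ q
            exact hr _ (Fin.succAbove_ne c q)
          · intro hr
            refine ⟨h0, fun q hq => ?_⟩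
            obtain ⟨z, hz⟩ := Fin.exists_succAbove_eq hq
            rw [← hz]
            exact hr z
        have hMr : Mr k b = Mr k (fun q => b (c.succAbove q)) := by
          unfold Mr
          congr 1
          rw [Fin.prod_univ_succAbove (fun q => ((b q).factorial : ℝ)) c, h0]
          simp
        beta_reduce
        by_cases h : ∀ q : Fin p, 1 ≤ b (c.succAbove q)
        · rw [if_pos (hcond.mpr h), if_pos h, hMr]
        · rw [if_neg (fun hc => h (hcond.mp hc)), if_neg h]
    rw [Finset.sum_congr rfl (fun c _ => Finset.sum_congr rfl (stepC c))]
    have : ∀ c : Fin (p+1),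
        (∑ b ∈ Finset.Nat.antidiagonalTuple (p+1) k,
          ((if ∀ q, 1 ≤ b q then Mr k b else 0)
            + (if b c = 0 ∧ ∀ q, q ≠ c → 1 ≤ b q then Mr k b else 0)))
        = Sbar k (p+1) + Sbar k p := by
      intro c
      rw [Finset.sum_add_distrib, stepD c]
      rfl
    rw [Finset.sum_congr rfl (fun c _ => this c), Finset.sum_const, Finset.card_univ]
    rw [Sbar_eq k (p+1), Sbar_eq k p]
    have hst : (stirling2 (k+1) (p+1) : ℝ) = (p+1) * stirling2 k (p+1) + stirling2 k p := by
      rw [show stirling2 (k+1) (p+1) = (p + 1) * stirling2 k (p + 1) + stirling2 k p from rfl]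
      push_cast
      ring
    rw [hst]
    simp only [Fintype.card_fin, nsmul_eq_mul, Nat.factorial_succ]
    push_cast
    ring

lemma sum_cnt {n k : ℕ} (m : Fin k → Fin n) : ∑ c, cnt m c = k := by
  unfold cnt
  rw [← Finset.card_eq_sum_card_fiberwise (fun x _ => Finset.mem_univ (m x))]
  simp

lemma surj_iff {n k : ℕ} (m : Fin k → Fin n) :
    Function.Surjective m ↔ ∀ c, 1 ≤ cnt m c := by
  constructor
  · intro h c
    obtain ⟨l, hl⟩ := h c
    exact Finset.card_pos.mpr ⟨l, by simp [cnt, hl]⟩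
  · intro h c
    obtain ⟨l, hl⟩ := Finset.card_pos.mp (h c)
    exact ⟨l, by simpa [cnt] using hl⟩

lemma sum_surj_sampleProb (n k : ℕ) (θ : ℝ) :
    (∑ m : Fin k → Fin n, if Function.Surjective m then sampleProb θ m else 0)
      = (n.factorial : ℝ) * BellP θ k n / rf ((n : ℝ) * θ) k := by
  have h1 : ∀ m : Fin k → Fin n, (if Function.Surjective m then sampleProb θ m else 0)
      = (∏ c, if 1 ≤ cnt m c then rf θ (cnt m c) else 0) / rf ((n : ℝ) * θ) k := by
    intro m
    rw [prod_ite_zero' (fun c => 1 ≤ cnt m c) (fun c => rf θ (cnt m c))]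
    by_cases h : Function.Surjective m
    · rw [if_pos h, if_pos ((surj_iff m).mp h)]
      rfl
    · rw [if_neg h, if_neg (fun hall => h ((surj_iff m).mpr hall)), zero_div]
  rw [Finset.sum_congr rfl (fun m _ => h1 m), ← Finset.sum_div]
  congr 1
  rw [master k (fun c j => if 1 ≤ j then rf θ j else 0)]
  rw [BellP, ← mul_assoc]
  have hn : (n.factorial : ℝ) ≠ 0 := Nat.cast_ne_zero.mpr (Nat.factorial_ne_zero n)
  rw [show (n.factorial : ℝ) * ((k.factorial : ℝ) / (n.factorial : ℝ))
      = (k.factorial : ℝ) by field_simp]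
  rw [Finset.mul_sum]
  apply Finset.sum_congr rfl
  intro b _
  rw [prod_ite_zero' (fun c => 1 ≤ b c) (fun c => rf θ (b c))]
  by_cases hpos : ∀ q, 1 ≤ b q
  · rw [if_pos hpos, if_pos hpos, Mr, Finset.prod_div_distrib,
      div_mul_eq_mul_div, mul_div_assoc]
  · rw [if_neg hpos, if_neg hpos, mul_zero, mul_zero]

lemma surj_count (n k : ℕ) :
    (∑ m : Fin k → Fin n, if Function.Surjective m then (1:ℝ) else 0)
      = (n.factorial : ℝ) * (stirling2 k n : ℝ) := by
  have h1 : ∀ m : Fin k → Fin n, (if Function.Surjective m then (1:ℝ) else 0)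
      = ∏ c, if 1 ≤ cnt m c then (1:ℝ) else 0 := by
    intro m
    rw [Fintype.prod_boole]
    by_cases h : Function.Surjective m
    · rw [if_pos h, if_pos ((surj_iff m).mp h)]
    · rw [if_neg h, if_neg (fun hall => h ((surj_iff m).mpr hall))]
  rw [Finset.sum_congr rfl (fun m _ => h1 m),
    master k (fun c j => if 1 ≤ j then (1:ℝ) else 0), ← Sbar_eq, Sbar]
  apply Finset.sum_congr rfl
  intro b _
  rw [Fintype.prod_boole]
  by_cases hpos : ∀ q, 1 ≤ b q
  · rw [if_pos hpos, if_pos hpos, mul_one]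
  · rw [if_neg hpos, if_neg hpos, mul_zero]

lemma tendsto_sp {n k : ℕ} (hn : 1 ≤ n) (m : Fin k → Fin n) :
    Tendsto (fun θ : ℝ => sampleProb θ m) atTop (nhds (1 / (n : ℝ) ^ k)) := by
  have hnum : Tendsto (fun θ : ℝ => ∏ c, (rf θ (cnt m c) / θ ^ (cnt m c))) atTop
      (nhds (∏ _c : Fin n, (1:ℝ))) := by
    apply tendsto_finset_prod
    intro c _
    have := tendsto_rf_div 1 (cnt m c)
    simp only [one_mul, one_pow] at this
    exact this
  rw [Finset.prod_const_one] at hnum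
  have hden := tendsto_rf_div (n : ℝ) k
  have hnk : ((n : ℝ)) ^ k ≠ 0 := pow_ne_zero _ (Nat.cast_ne_zero.mpr (by omega))
  have hq := hnum.div hden hnk
  apply hq.congr'
  filter_upwards [eventually_gt_atTop 0] with θ hθ
  simp only [Pi.div_apply]
  have hθk : θ ^ k ≠ 0 := pow_ne_zero _ hθ.ne'
  have hB : rf ((n : ℝ) * θ) k ≠ 0 := by
    have : (0:ℝ) < (n : ℝ) * θ := by
      have : (0:ℝ) < (n:ℝ) := by exact_mod_cast (by omega : 0 < n)
      positivity
    exact (rf_pos this k).ne'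
  rw [Finset.prod_div_distrib, Finset.prod_pow_eq_pow_sum, sum_cnt m]
  show (∏ c, rf θ (cnt m c)) / θ ^ k / (rf ((n : ℝ) * θ) k / θ ^ k) = sampleProb θ m
  rw [div_div_div_cancel_right₀ hθk]
  rfl
/-- Coupon collector: for `k ≥ n`, the probability that all `n` fragments have
been visited by time `k` (i.e. `K_n⁺ ≤ k`, the sample function is surjective)
equals `n! B_{k,n}(θ)/(nθ)_k`; for `θ = 1` it is `C(k-1,n-1)/C(n+k-1,k)`, and
as `θ → ∞` it converges to `n! S(k,n)/n^k`. -/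
theorem coupon_collector (n k : ℕ) (hn : 1 ≤ n) (hkn : n ≤ k) :
    (∀ θ : ℝ, 0 < θ →
      (∑ m : Fin k → Fin n,
          if Function.Surjective m then sampleProb θ m else 0) =
        (n.factorial : ℝ) * BellP θ k n / rf ((n : ℝ) * θ) k) ∧
    (∑ m : Fin k → Fin n,
        if Function.Surjective m then sampleProb 1 m else 0) =
      ((k - 1).choose (n - 1) : ℝ) / ((n + k - 1).choose k : ℝ) ∧
    Tendsto
      (fun θ : ℝ => ∑ m : Fin k → Fin n,
        if Function.Surjective m then sampleProb θ m else 0)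
      atTop
      (nhds ((n.factorial : ℝ) * (stirling2 k n : ℝ) / (n : ℝ) ^ k)) := by
  refine ⟨fun θ _ => sum_surj_sampleProb n k θ, ?_, ?_⟩
  · rw [sum_surj_sampleProb n k 1]
    have hk0 : (k.factorial : ℝ) ≠ 0 := Nat.cast_ne_zero.mpr (Nat.factorial_ne_zero k)
    have hB : (n.factorial : ℝ) * BellP 1 k n
        = (k.factorial : ℝ) * (((k-1).choose (n-1) : ℕ) : ℝ) := by
      rw [BellP, ← mul_assoc, show (n.factorial : ℝ) * ((k.factorial : ℝ) / (n.factorial : ℝ))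
        = (k.factorial : ℝ) by
          field_simp]
      congr 1
      have hterm : ∀ b ∈ Finset.Nat.antidiagonalTuple n k,
          (if ∀ q, 1 ≤ b q then ∏ q, rf 1 (b q) / ((b q).factorial : ℝ) else 0)
            = if ∀ q, 1 ≤ b q then (1:ℝ) else 0 := by
        intro b _
        by_cases h : ∀ q, 1 ≤ b q
        · rw [if_pos h, if_pos h]
          have h1 : ∀ q : Fin n, rf 1 (b q) / ((b q).factorial : ℝ) = 1 := fun q => by
            rw [rf_one]
            exact div_self (Nat.cast_ne_zero.mpr (Nat.factorial_ne_zero _))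
          rw [Finset.prod_congr rfl fun q _ => h1 q, Finset.prod_const_one]
        · rw [if_neg h, if_neg h]
      rw [Finset.sum_congr rfl hterm, Finset.sum_boole, comp_card n k hn hkn]
    have hrf : rf ((n : ℝ) * 1) k = (k.factorial : ℝ) * (((n+k-1).choose k : ℕ) : ℝ) := by
      rw [mul_one, rf_nat, Nat.ascFactorial_eq_factorial_mul_choose']
      push_cast
      ring
    rw [hB, hrf, mul_div_mul_left _ _ hk0]
  · have hm : ∀ m : Fin k → Fin n,
        Tendsto (fun θ : ℝ => if Function.Surjective m then sampleProb θ m else 0) atTop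
          (nhds (if Function.Surjective m then 1/(n:ℝ)^k else 0)) := by
      intro m
      by_cases hs : Function.Surjective m
      · simp only [if_pos hs]
        exact tendsto_sp hn m
      · simp only [if_neg hs]
        exact tendsto_const_nhds
    have ht := tendsto_finset_sum Finset.univ (fun m _ => hm m)
    have hval : (∑ m : Fin k → Fin n, if Function.Surjective m then 1/(n:ℝ)^k else 0)
        = (n.factorial : ℝ) * (stirling2 k n : ℝ) / (n:ℝ)^k := by
      have h2 : ∀ m : Fin k → Fin n, (if Function.Surjective m then 1/(n:ℝ)^k else 0)
          = (if Function.Surjective m then (1:ℝ) else 0) * (1/(n:ℝ)^k) := by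
        intro m
        by_cases hs : Function.Surjective m <;> simp [hs]
      rw [Finset.sum_congr rfl fun m _ => h2 m, ← Finset.sum_mul, surj_count, mul_one_div,
        mul_div_assoc]
    rw [hval] at ht
    exact ht
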